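/- Let β, L > 0, 0 < r ≤ 2, δ > 0, D > 4δ, and let J: ℝ → ℝ be measurable with 0 ≤ J ≤ 1 and J(u) = 0 for u ∉ [δ, D-δ]. For h > 0 define J_h(t) = 2√(πβrL) h^{1-r/2} e^{β/h^r} e^{-2β|t|^r} J(|t|^r - 1/h^r). Then ∫_{ℝ²} |V(w)|² e^{2β‖w‖^r} dw ≤ 4π² L e^{-2βδ} for all sufficiently small h > 0, where V(w) = J_h(‖w‖). -/

import Mathlib

open MeasureTheory Real Filter Set

lemma polar_aux_pcb (f : ℝ → ℝ) :
    ∫ w : EuclideanSpace ℝ (Fin 2), f ‖w‖ = 2 * (Real.pi * ∫ y in Ioi (0:ℝ), y * f y) := by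
  have hvol : (volume (Metric.ball (0 : EuclideanSpace ℝ (Fin 2)) 1)).toReal = Real.pi := by
    rw [EuclideanSpace.volume_ball]
    simp [Fintype.card_fin]
    rw [Real.sq_sqrt Real.pi_nonneg, show (1:ℝ) + 1 = 2 by norm_num, Real.Gamma_two]
    simp [ENNReal.toReal_ofReal Real.pi_nonneg]
  rw [integral_fun_norm_addHaar (volume : Measure (EuclideanSpace ℝ (Fin 2))) f]
  simp only [finrank_euclideanSpace_fin, hvol, smul_eq_mul, nsmul_eq_mul]
  norm_num
  exact Or.inl hvol

set_option maxHeartbeats 1600000 in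
theorem perturbation_class_bound (β L r δ D : ℝ) (hβ : 0 < β) (hL : 0 < L)
    (hr0 : 0 < r) (hr2 : r ≤ 2) (hδ : 0 < δ) (hD : 4 * δ < D)
    (J : ℝ → ℝ) (hJmeas : Measurable J) (hJ0 : ∀ u, 0 ≤ J u) (hJ1 : ∀ u, J u ≤ 1)
    (hJsupp : ∀ u, u ∉ Set.Icc δ (D - δ) → J u = 0)
    (Jh : ℝ → ℝ → ℝ)
    (hJh : ∀ h t, Jh h t = 2 * Real.sqrt (Real.pi * β * r * L) * h ^ (1 - r / 2) *
        Real.exp (β / h ^ r) * Real.exp (-2 * β * |t| ^ r) * J (|t| ^ r - 1 / h ^ r)) :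
    ∀ᶠ h : ℝ in nhdsWithin 0 (Set.Ioi 0),
      ∫ w : EuclideanSpace ℝ (Fin 2), (Jh h ‖w‖) ^ 2 * Real.exp (2 * β * ‖w‖ ^ r) ≤
        4 * Real.pi ^ 2 * L * Real.exp (-2 * β * δ) := by
  have hπ := Real.pi_pos
  set K : ℝ := 1 - Real.exp (-(2 * β * (D - 2 * δ))) with hKdef
  have hexpK : Real.exp (-(2 * β * (D - 2 * δ))) < 1 := by
    rw [Real.exp_lt_one_iff]; nlinarith
  have hK0 : 0 < K := by simp only [hKdef]; linarith
  have hKlt : K < 1 := by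
    have := Real.exp_pos (-(2 * β * (D - 2 * δ))); simp only [hKdef]; linarith
  have hF : ContinuousAt (fun h : ℝ => (1 + (D - δ) * h ^ r) ^ ((2 - r) / r) * K) 0 := by
    apply ContinuousAt.mul _ continuousAt_const
    apply ContinuousAt.rpow_const _ (Or.inr (div_nonneg (by linarith) hr0.le))
    exact continuousAt_const.add
      (continuousAt_const.mul (Real.continuousAt_rpow_const 0 r (Or.inr hr0.le)))
  have hF0 : (1 + (D - δ) * (0:ℝ) ^ r) ^ ((2 - r) / r) * K < 1 := by
    rw [Real.zero_rpow hr0.ne', mul_zero, add_zero, Real.one_rpow, one_mul]; exact hKlt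
  have hev : ∀ᶠ h : ℝ in nhds 0, (1 + (D - δ) * h ^ r) ^ ((2 - r) / r) * K < 1 :=
    hF.eventually_lt_const hF0
  filter_upwards [eventually_nhdsWithin_of_eventually_nhds hev, self_mem_nhdsWithin]
    with h hsmall hh
  have hh0 : (0:ℝ) < h := hh
  have hhr : 0 < h ^ r := Real.rpow_pos_of_pos hh0 r
  set u₁ : ℝ := 1 / h ^ r + δ with hu₁def
  set u₂ : ℝ := 1 / h ^ r + (D - δ) with hu₂def
  have hu₁0 : 0 < u₁ := by positivity
  have hu12 : u₁ ≤ u₂ := by simp only [hu₁def, hu₂def]; linarith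
  have hu₂0 : 0 < u₂ := lt_of_lt_of_le hu₁0 hu12
  set t₁ : ℝ := u₁ ^ r⁻¹ with ht₁def
  set t₂ : ℝ := u₂ ^ r⁻¹ with ht₂def
  have ht₁0 : 0 < t₁ := Real.rpow_pos_of_pos hu₁0 _
  have ht12 : t₁ ≤ t₂ := Real.rpow_le_rpow hu₁0.le hu12 (by positivity)
  have ht₂0 : 0 < t₂ := lt_of_lt_of_le ht₁0 ht12
  have ht₁r : t₁ ^ r = u₁ := Real.rpow_inv_rpow hu₁0.le hr0.ne'
  have ht₂r : t₂ ^ r = u₂ := Real.rpow_inv_rpow hu₂0.le hr0.ne'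
  set C : ℝ := 4 * Real.pi * β * r * L * h ^ (2 - r) * Real.exp (2 * (β / h ^ r)) with hCdef
  have hC0 : 0 ≤ C := by positivity
  set M : ℝ := C * t₂ ^ (2 - r) with hMdef
  set k : ℝ → ℝ := fun t => t ^ (r - 1) * Real.exp (-2 * β * t ^ r) with hkdef
  -- the algebraic identity
  have hsq : ∀ y : ℝ, 0 < y → y * ((Jh h y) ^ 2 * Real.exp (2 * β * y ^ r)) =
      C * ((J (y ^ r - 1 / h ^ r)) ^ 2 * (y * Real.exp (-2 * β * y ^ r))) := by
    intro y hy
    have hJy := hJh h y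
    rw [abs_of_pos hy] at hJy
    rw [hJy]
    have e1 : Real.sqrt (Real.pi * β * r * L) ^ 2 = Real.pi * β * r * L :=
      Real.sq_sqrt (by positivity)
    have e2 : (h ^ (1 - r / 2)) ^ 2 = h ^ (2 - r) := by
      rw [← Real.rpow_natCast (h ^ (1 - r / 2)) 2, ← Real.rpow_mul hh0.le]
      norm_num; ring_nf
    have e3 : Real.exp (β / h ^ r) ^ 2 = Real.exp (2 * (β / h ^ r)) := by
      rw [sq, ← Real.exp_add]; ring_nf
    have e4 : Real.exp (-2 * β * y ^ r) ^ 2 * Real.exp (2 * β * y ^ r)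
        = Real.exp (-2 * β * y ^ r) := by
      rw [sq, ← Real.exp_add, ← Real.exp_add]; ring_nf
    calc y * ((2 * Real.sqrt (Real.pi * β * r * L) * h ^ (1 - r / 2) *
          Real.exp (β / h ^ r) * Real.exp (-2 * β * y ^ r) * J (y ^ r - 1 / h ^ r)) ^ 2 *
          Real.exp (2 * β * y ^ r))
        = 4 * Real.sqrt (Real.pi * β * r * L) ^ 2 * (h ^ (1 - r / 2)) ^ 2 *
          Real.exp (β / h ^ r) ^ 2 *
          (Real.exp (-2 * β * y ^ r) ^ 2 * Real.exp (2 * β * y ^ r)) *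
          ((J (y ^ r - 1 / h ^ r)) ^ 2 * y) := by ring
      _ = _ := by rw [e1, e2, e3, e4, hCdef]; ring
  have hsub : Icc t₁ t₂ ⊆ Ioi (0:ℝ) := fun y hy => lt_of_lt_of_le ht₁0 hy.1
  -- pointwise bound
  have hbound : ∀ y ∈ Ioi (0:ℝ), y * ((Jh h y) ^ 2 * Real.exp (2 * β * y ^ r)) ≤
      (Icc t₁ t₂).indicator (fun t => M * k t) y := by
    intro y hy
    have hy0 : (0:ℝ) < y := hy
    by_cases hmem : y ∈ Icc t₁ t₂
    · rw [indicator_of_mem hmem, hsq y hy0, hMdef, mul_assoc C (t₂ ^ (2 - r)) (k y)]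
      refine mul_le_mul_of_nonneg_left ?_ hC0
      have hE := Real.exp_pos (-2 * β * y ^ r)
      have hJsq : (J (y ^ r - 1 / h ^ r)) ^ 2 ≤ 1 := by
        have h0 := hJ0 (y ^ r - 1 / h ^ r); have h1 := hJ1 (y ^ r - 1 / h ^ r); nlinarith
      have hkey : y ≤ t₂ ^ (2 - r) * y ^ (r - 1) := by
        have hsplit : y ^ (2 - r) * y ^ (r - 1) = y := by
          rw [← Real.rpow_add hy0, show (2 - r) + (r - 1) = 1 by ring, Real.rpow_one]
        have hle : y ^ (2 - r) ≤ t₂ ^ (2 - r) :=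
          Real.rpow_le_rpow hy0.le hmem.2 (by linarith)
        nlinarith [Real.rpow_nonneg hy0.le (r - 1)]
      have s1 : (J (y ^ r - 1 / h ^ r)) ^ 2 * (y * Real.exp (-2 * β * y ^ r)) ≤
          y * Real.exp (-2 * β * y ^ r) := by
        simpa using mul_le_mul_of_nonneg_right hJsq (mul_nonneg hy0.le hE.le)
      refine s1.trans ?_
      simp only [hkdef]
      nlinarith
    · rw [indicator_of_notMem hmem]
      have hnot : y ^ r - 1 / h ^ r ∉ Icc δ (D - δ) := by
        intro hc
        obtain ⟨hc1, hc2⟩ := hc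
        apply hmem
        have hyr1 : u₁ ≤ y ^ r := by simp only [hu₁def]; linarith
        have hyr2 : y ^ r ≤ u₂ := by simp only [hu₂def]; linarith
        constructor
        · calc t₁ ≤ (y ^ r) ^ r⁻¹ :=
              Real.rpow_le_rpow hu₁0.le hyr1 (by positivity)
            _ = y := Real.rpow_rpow_inv hy0.le hr0.ne'
        · calc y = (y ^ r) ^ r⁻¹ := (Real.rpow_rpow_inv hy0.le hr0.ne').symm
            _ ≤ t₂ := Real.rpow_le_rpow (by positivity) hyr2 (by positivity)
      rw [hJh h y, abs_of_pos hy0, hJsupp _ hnot]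
      simp
  -- continuity and integrability
  have hkcont : ContinuousOn k (Icc t₁ t₂) := by
    intro t ht
    have ht0 : t ≠ 0 := (lt_of_lt_of_le ht₁0 ht.1).ne'
    exact ((Real.continuousAt_rpow_const t (r - 1) (Or.inl ht0)).mul
      (Real.continuous_exp.continuousAt.comp
        (continuousAt_const.mul (Real.continuousAt_rpow_const t r (Or.inl ht0))))).continuousWithinAt
  have hind_int : Integrable ((Icc t₁ t₂).indicator fun t => M * k t) :=
    (integrable_indicator_iff measurableSet_Icc).2
      ((continuousOn_const.mul hkcont).integrableOn_compact isCompact_Icc)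
  have hmJh : Measurable (Jh h) := by
    have hfun : Jh h = fun t => 2 * Real.sqrt (Real.pi * β * r * L) * h ^ (1 - r / 2) *
        Real.exp (β / h ^ r) * Real.exp (-2 * β * |t| ^ r) * J (|t| ^ r - 1 / h ^ r) :=
      funext (hJh h)
    rw [hfun]
    fun_prop
  have hφm : Measurable fun y : ℝ => y * ((Jh h y) ^ 2 * Real.exp (2 * β * y ^ r)) := by
    fun_prop
  have hφint : IntegrableOn (fun y : ℝ => y * ((Jh h y) ^ 2 * Real.exp (2 * β * y ^ r)))
      (Ioi 0) := by
    refine Integrable.mono' hind_int.integrableOn hφm.aestronglyMeasurable.restrict ?_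
    rw [ae_restrict_iff' measurableSet_Ioi]
    refine ae_of_all _ fun y hy => ?_
    have hy0 : (0:ℝ) < y := hy
    rw [Real.norm_eq_abs, abs_of_nonneg (mul_nonneg hy0.le (by positivity))]
    exact hbound y hy
  -- the FTC computation
  have hFTC : ∫ t in t₁..t₂, k t
      = (Real.exp (-2 * β * t₁ ^ r) - Real.exp (-2 * β * t₂ ^ r)) / (2 * β * r) := by
    have hderiv : ∀ t ∈ uIcc t₁ t₂, HasDerivAt
        (fun x : ℝ => -(1 / (2 * β * r)) * Real.exp (-2 * β * x ^ r)) (k t) t := by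
      intro t ht
      rw [uIcc_of_le ht12] at ht
      have ht0 : (0:ℝ) < t := lt_of_lt_of_le ht₁0 ht.1
      have h1 : HasDerivAt (fun x : ℝ => x ^ r) (r * t ^ (r - 1)) t :=
        Real.hasDerivAt_rpow_const (Or.inl ht0.ne')
      have h2 : HasDerivAt (fun x : ℝ => -2 * β * x ^ r) (-2 * β * (r * t ^ (r - 1))) t :=
        h1.const_mul _
      have h3 := (h2.exp).const_mul (-(1 / (2 * β * r)))
      simp only [hkdef]
      convert h3 using 1
      show t ^ (r - 1) * Real.exp (-2 * β * t ^ r) = -(1 / (2 * β * r)) * (Real.exp (-2 * β * t ^ r) * (-2 * β * (r * t ^ (r - 1))))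
      have hβr : 2 * β * r ≠ 0 := by positivity
      rw [show -(1 / (2 * β * r)) * (Real.exp (-2 * β * t ^ r) * (-2 * β * (r * t ^ (r - 1)))) = (1 / (2 * β * r) * (2 * β * r)) * (t ^ (r - 1) * Real.exp (-2 * β * t ^ r)) by ring, one_div_mul_cancel hβr, one_mul]
      all_goals rfl
    have hkc : ContinuousOn k (uIcc t₁ t₂) := by rw [uIcc_of_le ht12]; exact hkcont
    rw [intervalIntegral.integral_eq_sub_of_hasDerivAt hderiv hkc.intervalIntegrable]
    field_simp
    ring
  -- the radial bound
  have hR : ∫ y in Ioi (0:ℝ), y * ((Jh h y) ^ 2 * Real.exp (2 * β * y ^ r)) ≤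
      M * ((Real.exp (-2 * β * u₁) - Real.exp (-2 * β * u₂)) / (2 * β * r)) := by
    calc ∫ y in Ioi (0:ℝ), y * ((Jh h y) ^ 2 * Real.exp (2 * β * y ^ r))
        ≤ ∫ y in Ioi (0:ℝ), (Icc t₁ t₂).indicator (fun t => M * k t) y :=
          setIntegral_mono_on hφint hind_int.integrableOn measurableSet_Ioi hbound
      _ = ∫ y in Icc t₁ t₂, M * k y := by
          rw [setIntegral_indicator measurableSet_Icc,
            Set.inter_eq_self_of_subset_right hsub]
      _ = M * ∫ y in Icc t₁ t₂, k y := by rw [integral_const_mul]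
      _ = M * ((Real.exp (-2 * β * u₁) - Real.exp (-2 * β * u₂)) / (2 * β * r)) := by
          rw [integral_Icc_eq_integral_Ioc, ← intervalIntegral.integral_of_le ht12, hFTC,
            ht₁r, ht₂r]
  -- numeric assembly
  have hEdiff : Real.exp (-2 * β * u₁) - Real.exp (-2 * β * u₂)
      = Real.exp (-2 * β * (1 / h ^ r)) * (Real.exp (-2 * β * δ) * K) := by
    simp only [hu₁def, hu₂def, hKdef]
    rw [show -2 * β * (1 / h ^ r + δ) = (-2 * β * (1 / h ^ r)) + (-2 * β * δ) by ring,
      Real.exp_add,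
      show -2 * β * (1 / h ^ r + (D - δ)) =
        (-2 * β * (1 / h ^ r)) + (-2 * β * δ) + (-(2 * β * (D - 2 * δ))) by ring,
      Real.exp_add, Real.exp_add]
    ring
  have hcancel : Real.exp (2 * (β / h ^ r)) * Real.exp (-2 * β * (1 / h ^ r)) = 1 := by
    rw [← Real.exp_add, show 2 * (β / h ^ r) + (-2 * β * (1 / h ^ r)) = 0 by ring,
      Real.exp_zero]
  have hbase : (0:ℝ) < 1 + (D - δ) * h ^ r := by
    nlinarith [mul_pos (show (0:ℝ) < D - δ by linarith) hhr]
  have hX : h ^ (2 - r) * t₂ ^ (2 - r) = (1 + (D - δ) * h ^ r) ^ ((2 - r) / r) := by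
    have h1 : (h ^ r * u₂) ^ r⁻¹ = h * t₂ := by
      rw [Real.mul_rpow hhr.le hu₂0.le, Real.rpow_rpow_inv hh0.le hr0.ne']
    have h2 : h ^ r * u₂ = 1 + (D - δ) * h ^ r := by
      simp only [hu₂def]; field_simp
    calc h ^ (2 - r) * t₂ ^ (2 - r) = (h * t₂) ^ (2 - r) :=
        (Real.mul_rpow hh0.le ht₂0.le).symm
      _ = ((1 + (D - δ) * h ^ r) ^ r⁻¹) ^ (2 - r) := by rw [← h1, h2]
      _ = (1 + (D - δ) * h ^ r) ^ ((2 - r) / r) := by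
          rw [← Real.rpow_mul hbase.le]
          congr 1; ring
  have h2πL : 4 * Real.pi * β * r * L / (2 * β * r) = 2 * Real.pi * L := by
    field_simp; ring
  have hfinal : M * ((Real.exp (-2 * β * u₁) - Real.exp (-2 * β * u₂)) / (2 * β * r))
      = 2 * Real.pi * L * (Real.exp (-2 * β * δ) *
        ((1 + (D - δ) * h ^ r) ^ ((2 - r) / r) * K)) := by
    rw [hEdiff, hMdef, hCdef]
    have hre : 4 * Real.pi * β * r * L * h ^ (2 - r) * Real.exp (2 * (β / h ^ r)) *
        t₂ ^ (2 - r) *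
        (Real.exp (-2 * β * (1 / h ^ r)) * (Real.exp (-2 * β * δ) * K) / (2 * β * r))
        = (h ^ (2 - r) * t₂ ^ (2 - r)) *
          (Real.exp (2 * (β / h ^ r)) * Real.exp (-2 * β * (1 / h ^ r))) *
          (Real.exp (-2 * β * δ) * K) * (4 * Real.pi * β * r * L / (2 * β * r)) := by
      ring
    rw [hre, hX, hcancel, h2πL]
    ring
  have hfin2 : ∫ y in Ioi (0:ℝ), y * ((Jh h y) ^ 2 * Real.exp (2 * β * y ^ r)) ≤
      2 * Real.pi * L * Real.exp (-2 * β * δ) := by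
    refine (hR.trans (le_of_eq hfinal)).trans ?_
    have h1 : (1 + (D - δ) * h ^ r) ^ ((2 - r) / r) * K ≤ 1 := hsmall.le
    have h2 : Real.exp (-2 * β * δ) * ((1 + (D - δ) * h ^ r) ^ ((2 - r) / r) * K) ≤
        Real.exp (-2 * β * δ) * 1 :=
      mul_le_mul_of_nonneg_left h1 (Real.exp_nonneg _)
    simpa [mul_assoc] using
      mul_le_mul_of_nonneg_left h2 (show (0:ℝ) ≤ 2 * Real.pi * L by positivity)
  have hpolar := polar_aux_pcb (fun t => (Jh h t) ^ 2 * Real.exp (2 * β * t ^ r))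
  rw [show (∫ w : EuclideanSpace ℝ (Fin 2), (Jh h ‖w‖) ^ 2 * Real.exp (2 * β * ‖w‖ ^ r))
      = 2 * (Real.pi * ∫ y in Ioi (0:ℝ), y * ((Jh h y) ^ 2 * Real.exp (2 * β * y ^ r)))
      from hpolar]
  nlinarith [mul_le_mul_of_nonneg_left hfin2 (show (0:ℝ) ≤ 2 * Real.pi by positivity)]
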